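/- Let G be a finite connected bipartite simple graph with bipartition (V₁,V₂) that excludes K_h as a topological subgraph, and let χ be a pair-coloring that is 2-stable on G and satisfies χ(v₁,v₂) = χ(v₁',v₂') for all (v₁,v₂),(v₁',v₂') ∈ V₁×V₂ with v₁v₂ ∈ E(G) and v₁'v₂' ∈ E(G). Assume |V₂| > a·h²·|V₁|. Let E* := { {v₁,v₂} : v₁,v₂ ∈ V₁, v₁ ≠ v₂, and some w ∈ V₂ is adjacent to both v₁ and v₂ }. Then there are colors c₁,…,c_r ∈ χ(V₁×V₁) such that: (1) E* = ⋃_{i∈[r]} E_{c_i}, where E_{c_i} := { {v₁,v₂} : v₁,v₂ ∈ V₁, v₁ ≠ v₂, χ(v₁,v₂) = c_i }; (2) the graph H := (V₁, E*) is connected; and (3) for every i ∈ [r] the graph H_i := (V₁, E_{c_i}) is a topological subgraph of G. -/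

import Mathlib

open SimpleGraph

/-- The interior (set of internal vertices) of a walk: its support minus the two endpoints. -/
def walkInterior {V : Type*} {G : SimpleGraph V} {x y : V} (p : G.Walk x y) : Set V :=
  {z | z ∈ p.support ∧ z ≠ x ∧ z ≠ y}

/-- `H` is (isomorphic to) a topological subgraph of `G`: there is an injective map
`φ : V(H) → V(G)` together with, for every edge `xy` of `H`, a path in `G` from `φ x`
to `φ y` of length at least 1, such that these paths are pairwise internally
vertex-disjoint and no internal vertex of any of them lies in the image of `φ`. -/
def IsTopSubgraph {W : Type*} {V : Type*} (H : SimpleGraph W) (G : SimpleGraph V) : Prop :=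
  ∃ φ : W → V, Function.Injective φ ∧
    ∃ P : ∀ x y : W, H.Adj x y → G.Walk (φ x) (φ y),
      (∀ x y (hxy : H.Adj x y), (P x y hxy).IsPath ∧ 0 < (P x y hxy).length) ∧
      (∀ x y (hxy : H.Adj x y), P y x hxy.symm = (P x y hxy).reverse) ∧
      (∀ x y (hxy : H.Adj x y), Disjoint (walkInterior (P x y hxy)) (Set.range φ)) ∧
      (∀ x y (hxy : H.Adj x y), ∀ x' y' (hxy' : H.Adj x' y'), s(x, y) ≠ s(x', y') →
        Disjoint (walkInterior (P x y hxy)) (walkInterior (P x' y' hxy')))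

/-- `G` contains the complete graph on `h` vertices as a topological subgraph. -/
def HasTopK {V : Type*} (G : SimpleGraph V) (h : ℕ) : Prop :=
  IsTopSubgraph (⊤ : SimpleGraph (Fin h)) G

/-- `a` is a constant witnessing the Bollobás–Thomason / Komlós–Szemerédi degree bound:
for every `h ≥ 1`, every finite simple graph excluding `K_h` as a topological subgraph
has degree sum at most `a·h²·n`. -/
def DegSumConst (a : ℝ) : Prop :=
  ∀ (n h : ℕ) (G : SimpleGraph (Fin n)), 1 ≤ h → ¬ HasTopK G h →
    ∑ v : Fin n, (({u | G.Adj v u}.ncard : ℝ)) ≤ a * (h : ℝ) ^ 2 * (n : ℝ)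

/-- One refinement round of Color Refinement on the complete graph on `V`, where the
current vertex partition is `r` and the arc color of `(v,w)` is the pair
`(G.Adj v w, χ v w)` (multiset equality is expressed by equality of all counts). -/
def crStep {V C : Type*} (G : SimpleGraph V) (χ : V → V → C) (r : V → V → Prop) :
    V → V → Prop := fun x y =>
  r x y ∧ ∀ (z : V) (c₁ c₂ : C),
    ({u | u ≠ x ∧ r u z ∧ χ x u = c₁ ∧ χ u x = c₂ ∧ G.Adj x u}.ncard =
      {u | u ≠ y ∧ r u z ∧ χ y u = c₁ ∧ χ u y = c₂ ∧ G.Adj y u}.ncard) ∧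
    ({u | u ≠ x ∧ r u z ∧ χ x u = c₁ ∧ χ u x = c₂ ∧ ¬ G.Adj x u}.ncard =
      {u | u ≠ y ∧ r u z ∧ χ y u = c₁ ∧ χ u y = c₂ ∧ ¬ G.Adj y u}.ncard)

/-- The Color Refinement stabilization of the partition `r` (iterating the refinement
round enough times to reach the stable partition). -/
def crStable {V C : Type*} [Fintype V] (G : SimpleGraph V) (χ : V → V → C)
    (r : V → V → Prop) : V → V → Prop :=
  (crStep G χ)^[Fintype.card V + 1] r

/-- Split all color classes of size at most `t` into singletons. -/
def splitSmall {V : Type*} (t : ℕ) (r : V → V → Prop) : V → V → Prop := fun x y =>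
  r x y ∧ ({u | r u x}.ncard ≤ t → x = y)

/-- The `t`-CR-stable partition obtained from the initial partition `r`: alternately
apply Color Refinement and split the classes of size at most `t`, until stable. -/
def tCRStable {V C : Type*} [Fintype V] (G : SimpleGraph V) (χ : V → V → C) (t : ℕ)
    (r : V → V → Prop) : V → V → Prop :=
  (fun s => splitSmall t (crStable G χ s))^[Fintype.card V + 1] r

/-- The partition obtained from the vertex coloring `v ↦ χ v v` by individualizing
every vertex of `X`. -/
def indivRel {V C : Type*} (χ : V → V → C) (X : Set V) : V → V → Prop := fun x y =>
  χ x x = χ y y ∧ (x ∈ X ↔ y ∈ X) ∧ (x ∈ X → x = y)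

/-- The `t`-closure `cl_t^{(G,χ)}(X)`: the set of vertices whose color class in the
`t`-CR-stable coloring (after individualizing `X`) is a singleton. -/
def clSet {V C : Type*} [Fintype V] (G : SimpleGraph V) (χ : V → V → C) (t : ℕ)
    (X : Set V) : Set V :=
  {v | {u | tCRStable G χ t (indivRel χ X) u v}.ncard = 1}

/-- The arc relation of the `t`-closure graph of `(G,χ)`. -/
def clArc {V C : Type*} [Fintype V] (G : SimpleGraph V) (χ : V → V → C) (t : ℕ) :
    V → V → Prop := fun v w => v ≠ w ∧ w ∈ clSet G χ t {v}

/-- A vertex is maximal if it lies in a strongly connected component of the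
`t`-closure graph without outgoing arcs. -/
def MaximalVtx {V C : Type*} [Fintype V] (G : SimpleGraph V) (χ : V → V → C) (t : ℕ)
    (v : V) : Prop :=
  ∀ u, clArc G χ t v u → clArc G χ t u v

/-- A vertex coloring is `1`-stable. -/
def IsOneStable {V C : Type*} (G : SimpleGraph V) (lam : V → C) : Prop :=
  ∀ v w, lam v = lam w → ∀ c,
    {u | G.Adj v u ∧ lam u = c}.ncard = {u | G.Adj w u ∧ lam u = c}.ncard

/-- A pair coloring is `2`-stable on the simple graph `G`. -/
def IsTwoStable {V C : Type*} (G : SimpleGraph V) (χ : V → V → C) : Prop :=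
  ∀ v w v' w', χ v w = χ v' w' →
    ((v = w ↔ v' = w') ∧ (G.Adj v w ↔ G.Adj v' w') ∧ χ v v = χ v' v' ∧ χ w w = χ w' w') ∧
    ∀ c₁ c₂, {u | χ v u = c₁ ∧ χ u w = c₂}.ncard = {u | χ v' u = c₁ ∧ χ u w' = c₂}.ncard

/-- A pair coloring is `2`-stable on the directed graph with arc relation `E`. -/
def IsTwoStableDigraph {V C : Type*} (E : V → V → Prop) (χ : V → V → C) : Prop :=
  ∀ v w v' w', χ v w = χ v' w' →
    ((v = w ↔ v' = w') ∧ (E v w ↔ E v' w') ∧ (E w v ↔ E w' v') ∧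
      χ v v = χ v' v' ∧ χ w w = χ w' w') ∧
    ∀ c₁ c₂, {u | χ v u = c₁ ∧ χ u w = c₂}.ncard = {u | χ v' u = c₁ ∧ χ u w' = c₂}.ncard

/-- A coloring of triples is `3`-stable on the simple graph `G`. -/
def IsThreeStable {V C : Type*} (G : SimpleGraph V) (χ₃ : V → V → V → C) : Prop :=
  ∀ v₁ v₂ v₃ w₁ w₂ w₃, χ₃ v₁ v₂ v₃ = χ₃ w₁ w₂ w₃ →
    ((v₁ = v₂ ↔ w₁ = w₂) ∧ (v₁ = v₃ ↔ w₁ = w₃) ∧ (v₂ = v₃ ↔ w₂ = w₃) ∧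
      (G.Adj v₁ v₂ ↔ G.Adj w₁ w₂) ∧ (G.Adj v₁ v₃ ↔ G.Adj w₁ w₃) ∧
      (G.Adj v₂ v₃ ↔ G.Adj w₂ w₃)) ∧
    ∀ c₁ c₂ c₃,
      {u | χ₃ u v₂ v₃ = c₁ ∧ χ₃ v₁ u v₃ = c₂ ∧ χ₃ v₁ v₂ u = c₃}.ncard =
        {u | χ₃ u w₂ w₃ = c₁ ∧ χ₃ w₁ u w₃ = c₂ ∧ χ₃ w₁ w₂ u = c₃}.ncard

/-- Reachability in `G` by a walk avoiding the set `S`. -/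
def ReachOutside {V : Type*} (G : SimpleGraph V) (S : Set V) (x y : V) : Prop :=
  ∃ p : G.Walk x y, ∀ z ∈ p.support, z ∉ S

/-- `Z` is the vertex set of a connected component of the induced subgraph `G − S`. -/
def IsCompOutside {V : Type*} (G : SimpleGraph V) (S Z : Set V) : Prop :=
  ∃ x₀, x₀ ∉ S ∧ Z = {y | ReachOutside G S x₀ y}

/-- The neighborhood `N_G(S)` of a set `S`: all vertices outside `S` with a neighbor in `S`. -/
def nbhdOf {V : Type*} (G : SimpleGraph V) (S : Set V) : Set V :=
  {v | v ∉ S ∧ ∃ u ∈ S, G.Adj v u}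

/-- A partition of the vertex set (given as an equivalence relation `r`) is
`λ`-definable: for some set `Cs` of colors attained on off-diagonal pairs, the classes
of `r` are exactly the connected components of the graph with edges
`{v,w}` (`v ≠ w`) such that `λ(v,w) ∈ Cs`. -/
def LamDefinable {V C : Type*} (lam : V → V → C) (r : V → V → Prop) : Prop :=
  ∃ Cs : Set C, (∀ c ∈ Cs, ∃ v w : V, v ≠ w ∧ lam v w = c) ∧
    ∀ x y, r x y ↔ (SimpleGraph.fromRel (fun v w => lam v w ∈ Cs)).Reachable x y

namespace TopAux

variable {V W U : Type*} {G : SimpleGraph V} {Γ : SimpleGraph W}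

lemma isTopSubgraph_refl (Γ : SimpleGraph W) : IsTopSubgraph Γ Γ := by
  refine ⟨id, Function.injective_id, fun x y h => Walk.cons h Walk.nil, ?_, ?_, ?_, ?_⟩
  · intro x y h
    constructor
    · simp [Walk.isPath_def, h.ne]
    · simp
  · intro x y h
    simp [Walk.reverse_cons]
  · intro x y h
    simp only [walkInterior, Walk.support_cons, Walk.support_nil]
    rw [Set.disjoint_left]
    rintro z ⟨hz, hzx, hzy⟩ -
    simp at hz
    tauto
  · intro x y h x' y' h' hne
    rw [Set.disjoint_left]
    rintro z ⟨hz, hzx, hzy⟩ -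
    simp only [Walk.support_cons, Walk.support_nil, List.mem_cons] at hz
    simp at hz
    tauto

variable {ψ : W → V} {μ : Sym2 W → V}

def liftWalk (ha : ∀ A B, Γ.Adj A B → G.Adj (ψ A) (μ s(A, B)))
    (hb : ∀ A B, Γ.Adj A B → G.Adj (μ s(A, B)) (ψ B)) :
    ∀ {A B : W}, Γ.Walk A B → G.Walk (ψ A) (ψ B)
  | _, _, Walk.nil => Walk.nil
  | _, _, Walk.cons h p => Walk.cons (ha _ _ h) (Walk.cons (hb _ _ h) (liftWalk ha hb p))

variable (ha : ∀ A B, Γ.Adj A B → G.Adj (ψ A) (μ s(A, B)))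
    (hb : ∀ A B, Γ.Adj A B → G.Adj (μ s(A, B)) (ψ B))

lemma liftWalk_length : ∀ {A B : W} (p : Γ.Walk A B),
    (liftWalk ha hb p).length = 2 * p.length := by
  intro A B p
  induction p with
  | nil => simp [liftWalk]
  | cons h p ih => simp [liftWalk, ih]; ring

lemma liftWalk_append : ∀ {A B D : W} (p : Γ.Walk A B) (q : Γ.Walk B D),
    liftWalk ha hb (p.append q) = (liftWalk ha hb p).append (liftWalk ha hb q) := by
  intro A B D p q
  induction p with
  | nil => simp [liftWalk]
  | cons h p ih => simp [liftWalk, ih, Walk.cons_append]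

lemma two_step_eq {x y m m' : V} (hm : m = m') (h1 : G.Adj x m) (h2 : G.Adj m y)
    (h1' : G.Adj x m') (h2' : G.Adj m' y) :
    (Walk.cons h1 (Walk.cons h2 Walk.nil) : G.Walk x y) =
      Walk.cons h1' (Walk.cons h2' Walk.nil) := by
  subst hm; rfl

lemma liftWalk_reverse : ∀ {A B : W} (p : Γ.Walk A B),
    liftWalk ha hb (p.reverse) = (liftWalk ha hb p).reverse := by
  intro A B p
  induction p with
  | nil => simp [liftWalk]
  | @cons u v w h p ih =>
      rw [Walk.reverse_cons, liftWalk_append ha hb, ih]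
      simp only [liftWalk]
      rw [Walk.reverse_cons, Walk.reverse_cons, ← Walk.append_assoc]
      congr 1
      simp only [Walk.cons_append, Walk.nil_append]
      exact two_step_eq (congrArg μ Sym2.eq_swap) _ _ _ _

lemma mem_support_liftWalk : ∀ {A B : W} (p : Γ.Walk A B) (z : V),
    z ∈ (liftWalk ha hb p).support ↔
      (∃ w ∈ p.support, ψ w = z) ∨ (∃ e ∈ p.edges, μ e = z) := by
  intro A B p z
  induction p with
  | nil => simp [liftWalk, eq_comm]
  | cons h p ih =>
      simp only [liftWalk, Walk.support_cons, Walk.edges_cons, List.mem_cons, ih]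
      constructor
      · rintro (h1 | h1 | h1)
        · exact Or.inl ⟨_, Or.inl rfl, h1.symm⟩
        · exact Or.inr ⟨_, Or.inl rfl, h1.symm⟩
        · rcases h1 with (⟨w, hw, hwz⟩ | ⟨e, he, hez⟩)
          · exact Or.inl ⟨w, Or.inr hw, hwz⟩
          · exact Or.inr ⟨e, Or.inr he, hez⟩
      · rintro (⟨w, (rfl | hw), hwz⟩ | ⟨e, (rfl | he), hez⟩)
        · exact Or.inl hwz.symm
        · exact Or.inr (Or.inr (Or.inl ⟨w, hw, hwz⟩))
        · exact Or.inr (Or.inl hez.symm)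
        · exact Or.inr (Or.inr (Or.inr ⟨e, he, hez⟩))


lemma liftWalk_isPath
    (hrange : ∀ e ∈ Γ.edgeSet, μ e ∉ Set.range ψ)
    (hψ : Function.Injective ψ)
    (hinjμ : ∀ e ∈ Γ.edgeSet, ∀ e' ∈ Γ.edgeSet, μ e = μ e' → e = e') :
    ∀ {A B : W} (p : Γ.Walk A B), p.IsPath → (liftWalk ha hb p).IsPath := by
  intro A B p hp
  induction p with
  | nil => simp [liftWalk]
  | @cons u v w h p ih =>
      rw [Walk.cons_isPath_iff] at hp
      obtain ⟨hp, hu⟩ := hp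
      simp only [liftWalk]
      rw [Walk.cons_isPath_iff, Walk.cons_isPath_iff]
      refine ⟨⟨ih hp, ?_⟩, ?_⟩
      · -- μ s(u,v) ∉ support of lift p
        intro hmem
        rw [mem_support_liftWalk ha hb] at hmem
        rcases hmem with ⟨x, hx, hxe⟩ | ⟨e, he, hee⟩
        · exact hrange _ (Γ.mem_edgeSet.2 h) ⟨x, hxe⟩
        · have : e = s(u, v) :=
            hinjμ _ (Walk.edges_subset_edgeSet p he) _ (Γ.mem_edgeSet.2 h) hee
          subst this
          exact hu (Walk.fst_mem_support_of_mem_edges p he)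
      · -- ψ u ∉ support of cons _ (lift p)
        intro hmem
        rw [Walk.support_cons, List.mem_cons] at hmem
        rcases hmem with hmem | hmem
        · exact hrange _ (Γ.mem_edgeSet.2 h) ⟨u, hmem⟩
        · rw [mem_support_liftWalk ha hb] at hmem
          rcases hmem with ⟨x, hx, hxe⟩ | ⟨e, he, hee⟩
          · exact hu (hψ hxe ▸ hx)
          · exact hrange _ (Walk.edges_subset_edgeSet p he) ⟨u, hee.symm⟩

lemma two_elem_sym2 {α : Type*} {A B p q : α} (hAB : A ≠ B)
    (hA : A = p ∨ A = q) (hB : B = p ∨ B = q) : s(A, B) = s(p, q) := by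
  rcases hA with rfl | rfl <;> rcases hB with rfl | rfl
  · exact absurd rfl hAB
  · rfl
  · exact Sym2.eq_swap
  · exact absurd rfl hAB

/-- The main lifting lemma: if `K` is a topological subgraph of `Γ` and `Γ` embeds into `G`
by length-2 paths through private midpoints, then `K` is a topological subgraph of `G`. -/
lemma isTopSubgraph_lift {K : SimpleGraph U}
    (hψ : Function.Injective ψ)
    (ha : ∀ A B, Γ.Adj A B → G.Adj (ψ A) (μ s(A, B)))
    (hb : ∀ A B, Γ.Adj A B → G.Adj (μ s(A, B)) (ψ B))
    (hrange : ∀ e ∈ Γ.edgeSet, μ e ∉ Set.range ψ)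
    (hinjμ : ∀ e ∈ Γ.edgeSet, ∀ e' ∈ Γ.edgeSet, μ e = μ e' → e = e')
    (htop : IsTopSubgraph K Γ) : IsTopSubgraph K G := by
  obtain ⟨φ, hφ, P, hPpath, hPrev, hPrange, hPdisj⟩ := htop
  -- endpoints of used edges are branch vertices
  have hends : ∀ x y (hxy : K.Adj x y) (A : W), A ∈ (P x y hxy).support →
      A ∈ walkInterior (P x y hxy) ∨ A = φ x ∨ A = φ y := by
    intro x y hxy A hA
    by_cases h1 : A = φ x
    · exact Or.inr (Or.inl h1)
    by_cases h2 : A = φ y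
    · exact Or.inr (Or.inr h2)
    exact Or.inl ⟨hA, h1, h2⟩
  have hvx : ∀ x y (hxy : K.Adj x y) x' y' (hxy' : K.Adj x' y'),
      s(x, y) ≠ s(x', y') → ∀ A, A ∈ (P x y hxy).support → A ∈ (P x' y' hxy').support →
      (A = φ x ∨ A = φ y) ∧ (A = φ x' ∨ A = φ y') := by
    intro x y hxy x' y' hxy' hne A hA hA'
    have key : ∀ x y (hxy : K.Adj x y) x' y' (hxy' : K.Adj x' y'), s(x, y) ≠ s(x', y') →
        A ∈ (P x y hxy).support → A ∈ (P x' y' hxy').support → A = φ x ∨ A = φ y := by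
      intro x y hxy x' y' hxy' hne hA hA'
      rcases hends x y hxy A hA with hint | hend
      · rcases hends x' y' hxy' A hA' with hint' | hend'
        · exact absurd hint' (Set.disjoint_left.1 (hPdisj x y hxy x' y' hxy' hne) hint)
        · have : A ∈ Set.range φ := by
            rcases hend' with rfl | rfl
            exacts [⟨x', rfl⟩, ⟨y', rfl⟩]
          exact absurd this (Set.disjoint_left.1 (hPrange x y hxy) hint)
      · exact hend
    exact ⟨key x y hxy x' y' hxy' hne hA hA',
      key x' y' hxy' x y hxy (Ne.symm hne) hA' hA⟩
  have hshared : ∀ x y (hxy : K.Adj x y) x' y' (hxy' : K.Adj x' y'),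
      s(x, y) ≠ s(x', y') → ∀ e, e ∈ (P x y hxy).edges → e ∈ (P x' y' hxy').edges → False := by
    intro x y hxy x' y' hxy' hne e he he'
    induction e with
    | _ A B =>
      have hAB : A ≠ B :=
        (Γ.mem_edgeSet.1 (Walk.edges_subset_edgeSet _ he)).ne
      have hA := hvx x y hxy x' y' hxy' hne A
        (Walk.fst_mem_support_of_mem_edges _ he) (Walk.fst_mem_support_of_mem_edges _ he')
      have hB := hvx x y hxy x' y' hxy' hne B
        (Walk.snd_mem_support_of_mem_edges _ he) (Walk.snd_mem_support_of_mem_edges _ he')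
      have e1 : s(A, B) = s(φ x, φ y) := two_elem_sym2 hAB hA.1 hB.1
      have e2 : s(A, B) = s(φ x', φ y') := two_elem_sym2 hAB hA.2 hB.2
      apply hne
      apply Sym2.map.injective hφ
      rw [Sym2.map_pair_eq, Sym2.map_pair_eq, ← e1, ← e2]
  -- now build the embedding of K into G
  refine ⟨ψ ∘ φ, hψ.comp hφ, fun x y hxy => liftWalk ha hb (P x y hxy), ?_, ?_, ?_, ?_⟩
  · intro x y hxy
    refine ⟨liftWalk_isPath ha hb hrange hψ hinjμ _ (hPpath x y hxy).1, ?_⟩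
    have := (hPpath x y hxy).2
    rw [liftWalk_length]
    omega
  · intro x y hxy
    show liftWalk ha hb (P y x hxy.symm) = (liftWalk ha hb (P x y hxy)).reverse
    rw [hPrev x y hxy, liftWalk_reverse]
  · intro x y hxy
    rw [Set.disjoint_left]
    rintro z ⟨hz, hzx, hzy⟩ ⟨u, rfl⟩
    rw [mem_support_liftWalk ha hb] at hz
    rcases hz with ⟨wv, hwv, heq⟩ | ⟨e, he, heq⟩
    · have hwvu : wv = φ u := hψ heq
      have hwint : wv ∈ walkInterior (P x y hxy) :=
        ⟨hwv, fun hcon => hzx (heq.symm.trans (congrArg ψ hcon)),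
          fun hcon => hzy (heq.symm.trans (congrArg ψ hcon))⟩
      exact (Set.disjoint_left.1 (hPrange x y hxy)) hwint ⟨u, hwvu.symm⟩
    · exact hrange _ (Walk.edges_subset_edgeSet _ he) ⟨φ u, heq.symm⟩
  · intro x y hxy x' y' hxy' hne
    rw [Set.disjoint_left]
    rintro z ⟨hz, hzx, hzy⟩ ⟨hz', hzx', hzy'⟩
    rw [mem_support_liftWalk ha hb] at hz hz'
    have hint : ∀ xx yy (hxxyy : K.Adj xx yy) (w : W), w ∈ (P xx yy hxxyy).support →
        ψ w ≠ ψ (φ xx) → ψ w ≠ ψ (φ yy) → w ∈ walkInterior (P xx yy hxxyy) := by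
      intro xx yy hxxyy w hw h1 h2
      exact ⟨hw, fun hcon => h1 (by rw [hcon]), fun hcon => h2 (by rw [hcon])⟩
    rcases hz with ⟨wv, hwv, rfl⟩ | ⟨e, he, rfl⟩
    · rcases hz' with ⟨wv', hwv', hww⟩ | ⟨e', he', hee⟩
      · have hww' : wv' = wv := hψ hww
        rw [hww'] at hwv'
        have h1 := hint x y hxy wv hwv hzx hzy
        have h2 := hint x' y' hxy' wv hwv' hzx' hzy'
        exact (Set.disjoint_left.1 (hPdisj x y hxy x' y' hxy' hne)) h1 h2
      · exact hrange _ (Walk.edges_subset_edgeSet _ he') ⟨wv, hee.symm⟩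
    · rcases hz' with ⟨wv', hwv', hww⟩ | ⟨e', he', hee⟩
      · exact hrange _ (Walk.edges_subset_edgeSet _ he) ⟨wv', hww⟩
      · have : e' = e := hinjμ _ (Walk.edges_subset_edgeSet _ he') _
          (Walk.edges_subset_edgeSet _ he) hee
        subst this
        exact hshared x y hxy x' y' hxy' hne e' he he'


lemma ncard_setOf_eq {α : Type*} [Fintype α] (p : α → Prop) [DecidablePred p] :
    {x | p x}.ncard = (Finset.univ.filter p).card := by
  simp [Set.ncard_eq_toFinset_card', Set.toFinset_setOf]

lemma sum_card_fiber {ι α : Type*} [DecidableEq α] (s : Finset ι) (t : ι → Finset α) :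
    ∑ u ∈ s, (t u).card = ∑ p ∈ s.biUnion t, (s.filter (fun u => p ∈ t u)).card := by
  classical
  have h1 : ∀ u ∈ s, (t u).card =
      ∑ p ∈ s.biUnion t, if p ∈ t u then 1 else 0 := by
    intro u hu
    rw [← Finset.card_filter]
    congr 1
    ext p
    simp only [Finset.mem_filter, Finset.mem_biUnion, iff_and_self]
    intro hp
    exact ⟨u, hu, hp⟩
  rw [Finset.sum_congr rfl h1, Finset.sum_comm]
  apply Finset.sum_congr rfl
  intro p hp
  rw [Finset.card_filter]

section TwoStable

variable {V C : Type*} [Fintype V] {G : SimpleGraph V} {χ : V → V → C}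

/-- K0: counts of sets defined by color pairs are invariant across 2-stably equivalent pairs. -/
lemma count_invariant (h2 : IsTwoStable G χ) {v w v' w' : V} (hvw : χ v w = χ v' w')
    (S : Set (C × C)) :
    {u | (χ v u, χ u w) ∈ S}.ncard = {u | (χ v' u, χ u w') ∈ S}.ncard := by
  classical
  have hcnt := (h2 v w v' w' hvw).2
  let f : V → C × C := fun u => (χ v u, χ u w)
  let f' : V → C × C := fun u => (χ v' u, χ u w')
  let T : Finset (C × C) := (Finset.univ.image f ∪ Finset.univ.image f').filter (· ∈ S)
  rw [ncard_setOf_eq, ncard_setOf_eq]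
  rw [show (Finset.univ.filter fun u => (χ v u, χ u w) ∈ S)
      = Finset.univ.filter fun u => f u ∈ S from rfl]
  rw [show (Finset.univ.filter fun u => (χ v' u, χ u w') ∈ S)
      = Finset.univ.filter fun u => f' u ∈ S from rfl]
  rw [Finset.card_eq_sum_card_fiberwise (f := f) (t := T)
      (fun u hu => by
        simp only [Finset.mem_coe, T, Finset.mem_filter, Finset.mem_union, Finset.mem_image]
        exact ⟨Or.inl ⟨u, Finset.mem_univ u, rfl⟩, (Finset.mem_filter.1 hu).2⟩),
    Finset.card_eq_sum_card_fiberwise (f := f') (t := T)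
      (fun u hu => by
        simp only [Finset.mem_coe, T, Finset.mem_filter, Finset.mem_union, Finset.mem_image]
        exact ⟨Or.inr ⟨u, Finset.mem_univ u, rfl⟩, (Finset.mem_filter.1 hu).2⟩)]
  apply Finset.sum_congr rfl
  intro b hb
  have hbS : b ∈ S := (Finset.mem_filter.1 hb).2
  have key := hcnt b.1 b.2
  rw [ncard_setOf_eq, ncard_setOf_eq] at key
  convert key using 2 <;> ext u <;>
    simp only [Finset.mem_filter, Finset.mem_univ, true_and, f, f', Prod.ext_iff] <;>
    constructor
  · rintro ⟨-, h1, h2⟩; exact ⟨h1, h2⟩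
  · rintro ⟨h1, h2⟩; exact ⟨by rw [h1, h2]; exact hbS, h1, h2⟩
  · rintro ⟨-, h1, h2⟩; exact ⟨h1, h2⟩
  · rintro ⟨h1, h2⟩; exact ⟨by rw [h1, h2]; exact hbS, h1, h2⟩

end TwoStable

end TopAux

set_option linter.unusedSectionVars false
namespace TopAux
open scoped Classical

lemma sym2_mk_out {α : Type*} (e : Sym2 α) : s(e.out.1, e.out.2) = e := by
  rw [Sym2.mk, e.out_eq]


section Stmt10

variable {V C : Type*} [Fintype V]

/-- Colors of adjacent (ordered) pairs. -/
def Acol (G : SimpleGraph V) (χ : V → V → C) : Set C := {c | ∃ p q : V, G.Adj p q ∧ χ p q = c}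

lemma adj_iff_color {G : SimpleGraph V} {χ : V → V → C} (h2 : IsTwoStable G χ) (v w : V) :
    G.Adj v w ↔ χ v w ∈ Acol G χ := by
  constructor
  · intro hadj; exact ⟨v, w, hadj, rfl⟩
  · rintro ⟨p, q, hpq, hc⟩
    exact ((h2 p q v w hc).1.2.1).1 hpq

/-- The set of common neighbors, as a `Finset`. -/
noncomputable def cnF (G : SimpleGraph V) (x y : V) : Finset V :=
  Finset.univ.filter (fun u => G.Adj x u ∧ G.Adj u y)

lemma mem_cnF {G : SimpleGraph V} {x y u : V} :
    u ∈ cnF G x y ↔ G.Adj x u ∧ G.Adj u y := by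
  simp [cnF]

lemma cnF_symm {G : SimpleGraph V} (x y : V) : cnF G x y = cnF G y x := by
  ext u
  simp only [mem_cnF]
  constructor <;> exact fun h => ⟨h.2.symm, h.1.symm⟩

lemma cn_card_eq {G : SimpleGraph V} {χ : V → V → C} (h2 : IsTwoStable G χ)
    {x y x' y' : V} (hc : χ x y = χ x' y') :
    (cnF G x y).card = (cnF G x' y').card := by
  have key : ∀ p q : V, (cnF G p q).card =
      {u | (χ p u, χ u q) ∈ ({pr : C × C | pr.1 ∈ Acol G χ ∧ pr.2 ∈ Acol G χ} : Set (C × C))}.ncard := by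
    intro p q
    rw [ncard_setOf_eq]
    congr 1
    ext u
    simp only [cnF, Finset.mem_filter, Finset.mem_univ, true_and, Set.mem_setOf_eq]
    rw [adj_iff_color h2 p u, adj_iff_color h2 u q]
  rw [key, key, count_invariant h2 hc]

/-- The neighborhood of a vertex, as a `Finset`. -/
noncomputable def NB (G : SimpleGraph V) (u : V) : Finset V :=
  Finset.univ.filter (fun z => G.Adj u z)

lemma mem_NB {G : SimpleGraph V} {u z : V} : z ∈ NB G u ↔ G.Adj u z := by simp [NB]

variable {G : SimpleGraph V} {χ : V → V → C} {V₁ V₂ : Set V}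

lemma mem_V2_of_adj (hdisj : Disjoint V₁ V₂)
    (hbip : ∀ x y : V, G.Adj x y → (x ∈ V₁ ∧ y ∈ V₂) ∨ (x ∈ V₂ ∧ y ∈ V₁))
    {x u : V} (hx : x ∈ V₁) (h : G.Adj x u) : u ∈ V₂ := by
  rcases hbip x u h with h' | h'
  · exact h'.2
  · exact absurd hx (Set.disjoint_right.1 hdisj h'.1)

lemma mem_V1_of_adj (hdisj : Disjoint V₁ V₂)
    (hbip : ∀ x y : V, G.Adj x y → (x ∈ V₁ ∧ y ∈ V₂) ∨ (x ∈ V₂ ∧ y ∈ V₁))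
    {u x : V} (hu : u ∈ V₂) (h : G.Adj u x) : x ∈ V₁ := by
  rcases hbip u x h with h' | h'
  · exact absurd hu (Set.disjoint_left.1 hdisj h'.1)
  · exact h'.2

lemma exists_nbr (hconn : G.Connected) {z₁ z₂ : V} (hz : z₁ ≠ z₂) (z : V) :
    ∃ z', G.Adj z z' := by
  have hne : ∃ t, t ≠ z := by
    by_cases h1 : z₁ = z
    · exact ⟨z₂, fun hc => hz (h1.trans hc.symm)⟩
    · exact ⟨z₁, h1⟩
  obtain ⟨t, ht⟩ := hne
  obtain ⟨p⟩ := hconn.preconnected z t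
  cases p with
  | nil => exact absurd rfl ht.symm
  | cons h q => exact ⟨_, h⟩


lemma reach_in_H {G : SimpleGraph V} {V₁ V₂ : Set V}
    (hdisj : Disjoint V₁ V₂)
    (hbip : ∀ x y : V, G.Adj x y → (x ∈ V₁ ∧ y ∈ V₂) ∨ (x ∈ V₂ ∧ y ∈ V₁)) :
    ∀ (n : ℕ) (x y : V) (hx : x ∈ V₁) (hy : y ∈ V₁) (p : G.Walk x y), p.length ≤ n →
    (SimpleGraph.fromRel
      (fun p q : ↥V₁ => ∃ u ∈ V₂, G.Adj p.1 u ∧ G.Adj q.1 u)).Reachable ⟨x, hx⟩ ⟨y, hy⟩ := by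
  intro n
  induction n with
  | zero =>
    intro x y hx hy p hp
    cases p with
    | nil => exact SimpleGraph.Reachable.refl _
    | cons h q => simp [SimpleGraph.Walk.length_cons] at hp
  | succ n ih =>
    intro x y hx hy p hp
    cases p with
    | nil => exact SimpleGraph.Reachable.refl _
    | @cons _ u _ hxu q =>
      have hu : u ∈ V₂ := mem_V2_of_adj hdisj hbip hx hxu
      cases q with
      | nil => exact absurd hy (Set.disjoint_right.1 hdisj hu)
      | @cons _ v' _ huv q' =>
        have hv' : v' ∈ V₁ := mem_V1_of_adj hdisj hbip hu huv
        have hlen : q'.length ≤ n := by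
          simp only [SimpleGraph.Walk.length_cons] at hp
          omega
        have htail := ih v' y hv' hy q' hlen
        by_cases hxy : x = v'
        · exact (show (⟨x, hx⟩ : ↥V₁) = ⟨v', hv'⟩ from Subtype.ext hxy) ▸ htail
        · refine SimpleGraph.Reachable.trans ?_ htail
          apply SimpleGraph.Adj.reachable
          rw [SimpleGraph.fromRel_adj]
          exact ⟨fun hc => hxy (congrArg Subtype.val hc), Or.inl ⟨u, hu, hxu, huv.symm⟩⟩

section PerColor

variable (hdisj : Disjoint V₁ V₂)
  (hbip : ∀ x y : V, G.Adj x y → (x ∈ V₁ ∧ y ∈ V₂) ∨ (x ∈ V₂ ∧ y ∈ V₁))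
  (hconn : G.Connected) (h2 : IsTwoStable G χ)
  (hedge : ∀ v₁ v₂ v₁' v₂' : V, v₁ ∈ V₁ → v₂ ∈ V₂ → v₁' ∈ V₁ → v₂' ∈ V₂ →
      G.Adj v₁ v₂ → G.Adj v₁' v₂' → χ v₁ v₂ = χ v₁' v₂')
  {ci : C} {v w : V} (hv : v ∈ V₁) (hw : w ∈ V₁) (hvw : v ≠ w)
  {u₀ : V} (hadjv : G.Adj v u₀) (hadjw : G.Adj w u₀) (hci : χ v w = ci)

include hdisj hbip hconn h2 hedge hv hw hvw hadjv hadjw hci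

/-- All vertices of `V₂` have the same degree. -/
lemma deg_reg : ∀ u ∈ V₂, ∀ u' ∈ V₂, (NB G u).card = (NB G u').card := by
  have hu₀ : u₀ ∈ V₂ := mem_V2_of_adj hdisj hbip hv hadjv
  have hdiag : ∀ u ∈ V₂, ∀ u' ∈ V₂, χ u u = χ u' u' := by
    intro u hu u' hu'
    obtain ⟨x, hx⟩ := exists_nbr hconn hvw u
    obtain ⟨x', hx'⟩ := exists_nbr hconn hvw u'
    have hxm : x ∈ V₁ := mem_V1_of_adj hdisj hbip hu hx
    have hxm' : x' ∈ V₁ := mem_V1_of_adj hdisj hbip hu' hx'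
    have : χ x u = χ x' u' := hedge x u x' u' hxm hu hxm' hu' hx.symm hx'.symm
    exact (h2 x u x' u' this).1.2.2.2
  intro u hu u' hu'
  have key : ∀ z : V, (NB G z).card =
      {t | (χ z t, χ t z) ∈ ({pr : C × C | pr.1 ∈ Acol G χ ∧ True} : Set (C × C))}.ncard := by
    intro z
    rw [ncard_setOf_eq]
    congr 1
    ext t
    simp only [NB, Finset.mem_filter, Finset.mem_univ, true_and, Set.mem_setOf_eq, and_true]
    rw [adj_iff_color h2 z t]
  rw [key, key, count_invariant h2 (hdiag u hu u' hu')]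

lemma class_topsub
    (a : ℝ) (hdeg : DegSumConst a) (h : ℕ) (hh : 1 ≤ h) (hexcl : ¬ HasTopK G h)
    (hsize : a * (h : ℝ) ^ 2 * (V₁.ncard : ℝ) < (V₂.ncard : ℝ)) :
    IsTopSubgraph (SimpleGraph.fromRel (fun p q : ↥V₁ => χ p.1 q.1 = ci)) G := by
  classical
  haveI : Fintype ↥V₁ := Fintype.ofFinite _
  haveI : Fintype ↥V₂ := Fintype.ofFinite _
  have hu₀ : u₀ ∈ V₂ := mem_V2_of_adj hdisj hbip hv hadjv
  set Γi := SimpleGraph.fromRel (fun p q : ↥V₁ => χ p.1 q.1 = ci) with hΓi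
  set D := (NB G u₀).card with hD
  set F := (Finset.univ.filter (fun y => χ v y = ci ∧ G.Adj y u₀)).card with hF
  set m := (cnF G v w).card with hm
  have hm1 : 1 ≤ m := Finset.card_pos.2 ⟨u₀, mem_cnF.2 ⟨hadjv, hadjw.symm⟩⟩
  have hedgecol : ∀ x u : V, x ∈ V₁ → G.Adj x u → χ x u = χ v u₀ := fun x u hx hadj =>
    hedge x u v u₀ hx (mem_V2_of_adj hdisj hbip hx hadj) hv hu₀ hadj hadjv
  have hFcount : ∀ x u : V, x ∈ V₁ → G.Adj x u →
      (Finset.univ.filter (fun y => χ x y = ci ∧ G.Adj y u)).card = F := by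
    intro x u hx hadj
    have hc : χ x u = χ v u₀ := hedgecol x u hx hadj
    have key : ∀ p q : V, (Finset.univ.filter (fun y => χ p y = ci ∧ G.Adj y q)).card =
        {t | (χ p t, χ t q) ∈ ({pr : C × C | pr.1 = ci ∧ pr.2 ∈ Acol G χ} : Set (C × C))}.ncard := by
      intro p q
      rw [ncard_setOf_eq]
      congr 1
      ext t
      simp only [Finset.mem_filter, Finset.mem_univ, true_and]
      rw [adj_iff_color h2 t q]
      exact Iff.rfl
    rw [hF, key x u, key v u₀]
    exact count_invariant h2 hc _
  have hcn : ∀ x y : V, χ x y = ci → (cnF G x y).card = m := fun x y hxy =>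
    cn_card_eq h2 (hxy.trans hci.symm)
  have hclass_ne : ∀ x y : V, χ x y = ci → x ≠ y := by
    intro x y hxy heq
    exact hvw (((h2 x y v w (hxy.trans hci.symm)).1.1).1 heq)
  set T1 : V → Finset (V × V) := fun u =>
    Finset.univ.filter (fun p : V × V => χ p.1 p.2 = ci ∧ G.Adj u p.1 ∧ G.Adj u p.2) with hT1
  have hT1card : ∀ u ∈ V₂, (T1 u).card = D * F := by
    intro u hu
    rw [Finset.card_eq_sum_card_fiberwise (f := Prod.fst) (t := NB G u)
      (fun p hp => mem_NB.2 (Finset.mem_filter.1 hp).2.2.1)]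
    have heach : ∀ x ∈ NB G u, ((T1 u).filter (fun p => p.1 = x)).card = F := by
      intro x hx
      have hxV1 : x ∈ V₁ := mem_V1_of_adj hdisj hbip hu (mem_NB.1 hx)
      rw [← hFcount x u hxV1 (mem_NB.1 hx).symm]
      apply Finset.card_bij (fun p _ => p.2)
      · intro p hp
        simp only [T1, Finset.mem_filter, Finset.mem_univ, true_and] at hp ⊢
        obtain ⟨⟨hc1, hc2, hc3⟩, hfst⟩ := hp
        exact ⟨hfst ▸ hc1, hc3.symm⟩
      · intro p hp p' hp' hpp
        have h1 := (Finset.mem_filter.1 hp).2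
        have h2' := (Finset.mem_filter.1 hp').2
        exact Prod.ext (h1.trans h2'.symm) hpp
      · intro y hy
        simp only [Finset.mem_filter, Finset.mem_univ, true_and] at hy
        refine ⟨(x, y), ?_, rfl⟩
        simp only [T1, Finset.mem_filter, Finset.mem_univ, true_and]
        refine ⟨⟨hy.1, mem_NB.1 hx, hy.2.symm⟩, ?_⟩
        simp
    rw [Finset.sum_congr rfl heach, Finset.sum_const, smul_eq_mul]
    have : (NB G u).card = D := deg_reg hdisj hbip hconn h2 hedge hv hw hvw hadjv hadjw hci u hu u₀ hu₀
    rw [this]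
  -- common-neighbor Finset on Sym2
  set cnS : Sym2 ↥V₁ → Finset V :=
    Sym2.lift ⟨fun A B => cnF G A.1 B.1, fun A B => cnF_symm A.1 B.1⟩ with hcnS
  have hcnS_mk : ∀ A B : ↥V₁, cnS s(A, B) = cnF G A.1 B.1 := fun A B => rfl
  have hcnS_V2 : ∀ (e : Sym2 ↥V₁) (u : V), u ∈ cnS e → u ∈ V₂ := by
    intro e
    induction e with
    | _ A B =>
      intro u hu
      rw [hcnS_mk] at hu
      exact mem_V2_of_adj hdisj hbip A.2 (mem_cnF.1 hu).1
  have hcnS_adj : ∀ (e : Sym2 ↥V₁) (u : V), u ∈ cnS e →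
      ∀ x : V, x ∈ Sym2.map (Subtype.val) e → G.Adj x u := by
    intro e
    induction e with
    | _ A B =>
      intro u hu x hx
      rw [hcnS_mk] at hu
      rw [Sym2.map_pair_eq, Sym2.mem_iff] at hx
      rcases hx with rfl | rfl
      · exact (mem_cnF.1 hu).1
      · exact (mem_cnF.1 hu).2.symm
  have hcnS_card : ∀ e ∈ Γi.edgeFinset, (cnS e).card = m := by
    intro e he
    induction e with
    | _ A B =>
      rw [SimpleGraph.mem_edgeFinset, SimpleGraph.mem_edgeSet, hΓi,
        SimpleGraph.fromRel_adj] at he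
      rw [hcnS_mk]
      rcases he.2 with h1 | h1
      · exact hcn _ _ h1
      · rw [cnF_symm]; exact hcn _ _ h1
  -- orientation pick
  set g : Sym2 ↥V₁ → V × V := fun e =>
    if χ e.out.1.1 e.out.2.1 = ci then (e.out.1.1, e.out.2.1) else (e.out.2.1, e.out.1.1)
    with hg
  have hgfact : ∀ e ∈ Γi.edgeFinset, χ (g e).1 (g e).2 = ci ∧
      Sym2.map (Subtype.val : ↥V₁ → V) e = s((g e).1, (g e).2) := by
    intro e he
    have hout : s(e.out.1, e.out.2) = e :=
      sym2_mk_out e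
    rw [SimpleGraph.mem_edgeFinset, ← hout, SimpleGraph.mem_edgeSet, hΓi,
      SimpleGraph.fromRel_adj] at he
    have hmap : Sym2.map (Subtype.val : ↥V₁ → V) e = s(e.out.1.1, e.out.2.1) := by
      conv_lhs => rw [← hout]
      rw [Sym2.map_pair_eq]
    by_cases hor : χ e.out.1.1 e.out.2.1 = ci
    · refine ⟨?_, ?_⟩
      · simp only [g, if_pos hor]; exact hor
      · simp only [g, if_pos hor]; exact hmap
    · have h1 : χ e.out.2.1 e.out.1.1 = ci := by
        rcases he.2 with h2 | h2
        · exact absurd h2 hor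
        · exact h2
      refine ⟨?_, ?_⟩
      · simp only [g, if_neg hor]; exact h1
      · simp only [g, if_neg hor]
        rw [hmap]; exact Sym2.eq_swap
  by_cases hcase : D * F ≤ m
  · -- GOOD CASE: Hall and direct embedding
    have hfiber : ∀ (s : Finset ↥(Γi.edgeFinset)) (u : V), u ∈ V₂ →
        (s.filter (fun e => u ∈ cnS e.1)).card ≤ D * F := by
      intro s u hu
      rw [← hT1card u hu]
      apply Finset.card_le_card_of_injOn (fun e => g e.1)
      · intro e hef
        obtain ⟨hg1, hg2⟩ := hgfact e.1 e.2
        have hucn : u ∈ cnS e.1 := (Finset.mem_filter.1 hef).2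
        have hadj1 : G.Adj (g e.1).1 u := hcnS_adj e.1 u hucn _ (by
          rw [hg2]; exact Sym2.mem_mk_left _ _)
        have hadj2 : G.Adj (g e.1).2 u := hcnS_adj e.1 u hucn _ (by
          rw [hg2]; exact Sym2.mem_mk_right _ _)
        simp only [Finset.mem_coe, T1, Finset.mem_filter, Finset.mem_univ, true_and]
        exact ⟨hg1, hadj1.symm, hadj2.symm⟩
      · intro e he e' he' hgg
        have hgg' : g e.1 = g e'.1 := hgg
        have h1 := (hgfact e.1 e.2).2
        have h2' := (hgfact e'.1 e'.2).2
        have : Sym2.map (Subtype.val : ↥V₁ → V) e.1 = Sym2.map Subtype.val e'.1 := by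
          rw [h1, h2', hgg']
        exact Subtype.ext (Sym2.map.injective Subtype.val_injective this)
    have hall : ∀ s : Finset ↥(Γi.edgeFinset),
        s.card ≤ (s.biUnion (fun e => cnS e.1)).card := by
      intro s
      have h1 : ∑ e ∈ s, (cnS e.1).card = m * s.card := by
        rw [Finset.sum_congr rfl (fun e _ => hcnS_card e.1 e.2), Finset.sum_const,
          smul_eq_mul, mul_comm]
      have h2' := sum_card_fiber s (fun e => cnS e.1)
      have h3 : ∀ p ∈ s.biUnion (fun e => cnS e.1),
          (s.filter (fun e => p ∈ cnS e.1)).card ≤ m := by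
        intro p hp
        obtain ⟨e, _, hpe⟩ := Finset.mem_biUnion.1 hp
        exact le_trans (hfiber s p (hcnS_V2 e.1 p hpe)) hcase
      have h4 : m * s.card ≤ m * (s.biUnion (fun e => cnS e.1)).card := by
        calc m * s.card = ∑ e ∈ s, (cnS e.1).card := h1.symm
          _ = ∑ p ∈ s.biUnion (fun e => cnS e.1),
              (s.filter (fun e => p ∈ cnS e.1)).card := h2'
          _ ≤ ∑ _p ∈ s.biUnion (fun e => cnS e.1), m := Finset.sum_le_sum h3
          _ = (s.biUnion (fun e => cnS e.1)).card * m := by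
              rw [Finset.sum_const, smul_eq_mul]
          _ = m * (s.biUnion (fun e => cnS e.1)).card := mul_comm _ _
      exact Nat.le_of_mul_le_mul_left h4 hm1
    obtain ⟨f, hfinj, hfmem⟩ :=
      (Finset.all_card_le_biUnion_card_iff_exists_injective
        (fun e : ↥(Γi.edgeFinset) => cnS e.1)).1 hall
    set μ : Sym2 ↥V₁ → V := fun e => if he : e ∈ Γi.edgeFinset then f ⟨e, he⟩ else u₀ with hμ
    have hμval : ∀ (e : Sym2 ↥V₁) (he : e ∈ Γi.edgeFinset), μ e ∈ cnS e := by
      intro e he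
      simp only [μ, dif_pos he]
      exact hfmem ⟨e, he⟩
    have hedgemem : ∀ {A B : ↥V₁}, Γi.Adj A B → s(A, B) ∈ Γi.edgeFinset := fun hAB =>
      SimpleGraph.mem_edgeFinset.2 (Γi.mem_edgeSet.2 hAB)
    refine isTopSubgraph_lift (ψ := (Subtype.val : ↥V₁ → V)) (μ := μ)
      Subtype.val_injective ?_ ?_ ?_ ?_ (isTopSubgraph_refl Γi)
    · intro A B hAB
      have := hμval _ (hedgemem hAB)
      rw [hcnS_mk] at this
      exact (mem_cnF.1 this).1
    · intro A B hAB
      have := hμval _ (hedgemem hAB)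
      rw [hcnS_mk] at this
      exact (mem_cnF.1 this).2
    · intro e he hecon
      have hμ2 : μ e ∈ V₂ := hcnS_V2 e _ (hμval e (SimpleGraph.mem_edgeFinset.2 he))
      obtain ⟨A, hA⟩ := hecon
      have : μ e ∈ V₁ := hA ▸ A.2
      exact Set.disjoint_left.1 hdisj this hμ2
    · intro e he e' he' heq
      have h1 : μ e = f ⟨e, SimpleGraph.mem_edgeFinset.2 he⟩ := dif_pos _
      have h2' : μ e' = f ⟨e', SimpleGraph.mem_edgeFinset.2 he'⟩ := dif_pos _
      rw [h1, h2'] at heq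
      exact congrArg Subtype.val (hfinj heq)
  · -- BAD CASE: build a dense graph with private midpoints, contradict hexcl
    exfalso
    push_neg at hcase
    have hDF1 : 1 ≤ D * F := le_trans hm1 (le_of_lt hcase)
    -- Hall for the V₂ side
    have hall₂ : ∀ s : Finset ↥V₂, s.card ≤ (s.biUnion (fun u => T1 u.1)).card := by
      intro s
      have h1 : ∑ u ∈ s, (T1 u.1).card = (D * F) * s.card := by
        rw [Finset.sum_congr rfl (fun u _ => hT1card u.1 u.2), Finset.sum_const,
          smul_eq_mul, mul_comm]
      have h2' := sum_card_fiber s (fun u => T1 u.1)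
      have h3 : ∀ p ∈ s.biUnion (fun u => T1 u.1),
          (s.filter (fun u => p ∈ T1 u.1)).card ≤ m := by
        intro p hp
        obtain ⟨u', _, hpu⟩ := Finset.mem_biUnion.1 hp
        have hpc : χ p.1 p.2 = ci := (Finset.mem_filter.1 hpu).2.1
        rw [← hcn p.1 p.2 hpc]
        apply Finset.card_le_card_of_injOn (fun u => u.1)
        · intro u hus
          have hmem := (Finset.mem_filter.1 hus).2
          simp only [T1, Finset.mem_filter, Finset.mem_univ, true_and] at hmem
          exact mem_cnF.2 ⟨hmem.2.1.symm, hmem.2.2⟩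
        · intro x _ y _ hxy
          exact Subtype.ext hxy
      have h4 : (D * F) * s.card ≤ (D * F) * (s.biUnion (fun u => T1 u.1)).card := by
        calc (D * F) * s.card = ∑ u ∈ s, (T1 u.1).card := h1.symm
          _ = ∑ p ∈ s.biUnion (fun u => T1 u.1),
              (s.filter (fun u => p ∈ T1 u.1)).card := h2'
          _ ≤ ∑ _p ∈ s.biUnion (fun u => T1 u.1), m := Finset.sum_le_sum h3
          _ ≤ ∑ _p ∈ s.biUnion (fun u => T1 u.1), (D * F) :=
              Finset.sum_le_sum (fun _ _ => le_of_lt hcase)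
          _ = (s.biUnion (fun u => T1 u.1)).card * (D * F) := by
              rw [Finset.sum_const, smul_eq_mul]
          _ = (D * F) * (s.biUnion (fun u => T1 u.1)).card := mul_comm _ _
      exact Nat.le_of_mul_le_mul_left h4 hDF1
    obtain ⟨f₂, hf₂inj, hf₂mem⟩ :=
      (Finset.all_card_le_biUnion_card_iff_exists_injective
        (fun u : ↥V₂ => T1 u.1)).1 hall₂
    have hf₂fact : ∀ u : ↥V₂, χ (f₂ u).1 (f₂ u).2 = ci ∧ G.Adj u.1 (f₂ u).1 ∧
        G.Adj u.1 (f₂ u).2 := by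
      intro u
      have := hf₂mem u
      simp only [T1, Finset.mem_filter, Finset.mem_univ, true_and] at this
      exact this
    have hp1V1 : ∀ u : ↥V₂, (f₂ u).1 ∈ V₁ := fun u =>
      mem_V1_of_adj hdisj hbip u.2 (hf₂fact u).2.1
    have hp2V1 : ∀ u : ↥V₂, (f₂ u).2 ∈ V₁ := fun u =>
      mem_V1_of_adj hdisj hbip u.2 (hf₂fact u).2.2
    have hpne : ∀ u : ↥V₂, (f₂ u).1 ≠ (f₂ u).2 := fun u =>
      hclass_ne _ _ (hf₂fact u).1
    -- the dense graph on Fin n₁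
    set n₁ := Fintype.card ↥V₁ with hn₁
    set q : ↥V₁ ≃ Fin n₁ := Fintype.equivFin ↥V₁ with hq
    set Γb : SimpleGraph (Fin n₁) := SimpleGraph.fromRel
      (fun A B => ∃ u : ↥V₂, f₂ u = (((q.symm A) : ↥V₁).1, ((q.symm B) : ↥V₁).1)) with hΓb
    -- the map from V₂ to the edges of Γb
    set gb : ↥V₂ → Sym2 (Fin n₁) := fun u =>
      s(q ⟨(f₂ u).1, hp1V1 u⟩, q ⟨(f₂ u).2, hp2V1 u⟩) with hgb
    have hgbmem : ∀ u : ↥V₂, gb u ∈ Γb.edgeFinset := by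
      intro u
      rw [SimpleGraph.mem_edgeFinset, hgb]
      rw [SimpleGraph.mem_edgeSet, hΓb, SimpleGraph.fromRel_adj]
      constructor
      · intro hcon
        exact hpne u (congrArg Subtype.val (q.injective hcon))
      · left
        exact ⟨u, by rw [Equiv.symm_apply_apply, Equiv.symm_apply_apply]⟩
    have hgbfiber : ∀ e ∈ Γb.edgeFinset, (Finset.univ.filter (fun u => gb u = e)).card ≤ 2 := by
      intro e he
      induction e with
      | _ A B =>
        have hsub : ∀ u ∈ Finset.univ.filter (fun u => gb u = s(A, B)),
            f₂ u ∈ ({(((q.symm A) : ↥V₁).1, ((q.symm B) : ↥V₁).1),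
                     (((q.symm B) : ↥V₁).1, ((q.symm A) : ↥V₁).1)} : Finset (V × V)) := by
          intro u hu
          have hgbu : gb u = s(A, B) := (Finset.mem_filter.1 hu).2
          rw [hgb, Sym2.eq_iff] at hgbu
          simp only [Finset.mem_insert, Finset.mem_singleton]
          rcases hgbu with ⟨h1, h2⟩ | ⟨h1, h2⟩
          · left
            rw [← h1, ← h2, Equiv.symm_apply_apply, Equiv.symm_apply_apply]
          · right
            rw [← h1, ← h2, Equiv.symm_apply_apply, Equiv.symm_apply_apply]
        calc (Finset.univ.filter (fun u => gb u = s(A, B))).card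
            ≤ ({(((q.symm A) : ↥V₁).1, ((q.symm B) : ↥V₁).1),
                (((q.symm B) : ↥V₁).1, ((q.symm A) : ↥V₁).1)} : Finset (V × V)).card :=
              Finset.card_le_card_of_injOn f₂ hsub (fun x _ y _ hxy => hf₂inj hxy)
          _ ≤ 2 := Finset.card_insert_le _ _ |>.trans (by simp)
    have hcard2 : Fintype.card ↥V₂ ≤ 2 * Γb.edgeFinset.card := by
      have := Finset.card_le_mul_card_image_of_maps_to
        (f := gb) (s := Finset.univ) (t := Γb.edgeFinset)
        (fun u _ => hgbmem u) 2 hgbfiber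
      have h0 : (Finset.univ : Finset ↥V₂).card ≤ 2 * Γb.edgeFinset.card := this
      rwa [Finset.card_univ] at h0
    have hsum_eq : ∑ A : Fin n₁, (Finset.univ.filter (Γb.Adj A)).card =
        2 * Γb.edgeFinset.card := by
      have hte := SimpleGraph.sum_degrees_eq_twice_card_edges Γb
      rw [← hte]
      apply Finset.sum_congr rfl
      intro A _
      rw [SimpleGraph.degree]
      congr 1
      ext B
      simp [SimpleGraph.mem_neighborFinset]
    have hV1card : V₁.ncard = n₁ := by
      rw [Set.ncard_eq_toFinset_card', Set.toFinset_card]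
    have hV2card : V₂.ncard = Fintype.card ↥V₂ := by
      rw [Set.ncard_eq_toFinset_card', Set.toFinset_card]
    have hK : HasTopK Γb h := by
      by_contra hKc
      have hb := hdeg n₁ h Γb hh hKc
      have hlow : (Fintype.card ↥V₂ : ℝ) ≤ ∑ A : Fin n₁, ({B | Γb.Adj A B}.ncard : ℝ) := by
        rw [← Nat.cast_sum, Nat.cast_le]
        calc Fintype.card ↥V₂ ≤ 2 * Γb.edgeFinset.card := hcard2
          _ = ∑ A : Fin n₁, (Finset.univ.filter (Γb.Adj A)).card := hsum_eq.symm
          _ = ∑ A : Fin n₁, {B | Γb.Adj A B}.ncard :=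
              Finset.sum_congr rfl (fun A _ => (ncard_setOf_eq _).symm)
      have hsize' : a * (h : ℝ) ^ 2 * (n₁ : ℝ) < (Fintype.card ↥V₂ : ℝ) := by
        rw [← hV1card, ← hV2card]
        exact_mod_cast hsize
      linarith
    -- lift the K_h subdivision from Γb to G
    set ψ : Fin n₁ → V := fun A => ((q.symm A) : ↥V₁).1 with hψ
    have hψinj : Function.Injective ψ :=
      Subtype.val_injective.comp q.symm.injective
    set μ₂ : Sym2 (Fin n₁) → V := fun e =>
      if hex : ∃ u : ↥V₂, gb u = e then (Classical.choose hex).1 else u₀ with hμ₂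
    have hex_of_adj : ∀ A B : Fin n₁, Γb.Adj A B → ∃ u : ↥V₂, gb u = s(A, B) := by
      intro A B hAB
      rw [hΓb, SimpleGraph.fromRel_adj] at hAB
      rcases hAB.2 with ⟨u, hu⟩ | ⟨u, hu⟩
      · refine ⟨u, ?_⟩
        have e1 : (⟨(f₂ u).1, hp1V1 u⟩ : ↥V₁) = q.symm A := Subtype.ext (congrArg Prod.fst hu)
        have e2 : (⟨(f₂ u).2, hp2V1 u⟩ : ↥V₁) = q.symm B := Subtype.ext (congrArg Prod.snd hu)
        rw [hgb]
        simp only []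
        rw [e1, e2, Equiv.apply_symm_apply, Equiv.apply_symm_apply]
      · refine ⟨u, ?_⟩
        have e1 : (⟨(f₂ u).1, hp1V1 u⟩ : ↥V₁) = q.symm B := Subtype.ext (congrArg Prod.fst hu)
        have e2 : (⟨(f₂ u).2, hp2V1 u⟩ : ↥V₁) = q.symm A := Subtype.ext (congrArg Prod.snd hu)
        rw [hgb]
        simp only []
        rw [e1, e2, Equiv.apply_symm_apply, Equiv.apply_symm_apply]
        exact Sym2.eq_swap
    have hμ₂fact : ∀ A B : Fin n₁, Γb.Adj A B →
        G.Adj (ψ A) (μ₂ s(A, B)) ∧ G.Adj (μ₂ s(A, B)) (ψ B) ∧ μ₂ s(A, B) ∈ V₂ := by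
      intro A B hAB
      have hex := hex_of_adj A B hAB
      have hval : μ₂ s(A, B) = (Classical.choose hex).1 := dif_pos hex
      set u := Classical.choose hex with hu
      have hspec : gb u = s(A, B) := Classical.choose_spec hex
      rw [hgb, Sym2.eq_iff] at hspec
      have hadj1 := (hf₂fact u).2.1
      have hadj2 := (hf₂fact u).2.2
      rcases hspec with ⟨h1, h2⟩ | ⟨h1, h2⟩
      · have e1 : (f₂ u).1 = ψ A := by
          rw [hψ]
          simp only []
          rw [← h1, Equiv.symm_apply_apply]
        have e2 : (f₂ u).2 = ψ B := by
          rw [hψ]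
          simp only []
          rw [← h2, Equiv.symm_apply_apply]
        rw [hval]
        exact ⟨by rw [← e1]; exact hadj1.symm, by rw [← e2]; exact hadj2, u.2⟩
      · have e1 : (f₂ u).1 = ψ B := by
          rw [hψ]
          simp only []
          rw [← h1, Equiv.symm_apply_apply]
        have e2 : (f₂ u).2 = ψ A := by
          rw [hψ]
          simp only []
          rw [← h2, Equiv.symm_apply_apply]
        rw [hval]
        exact ⟨by rw [← e2]; exact hadj2.symm, by rw [← e1]; exact hadj1, u.2⟩
    apply hexcl
    refine isTopSubgraph_lift hψinj (fun A B hAB => (hμ₂fact A B hAB).1)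
      (fun A B hAB => (hμ₂fact A B hAB).2.1) ?_ ?_ hK
    · -- range condition
      intro e he hecon
      induction e with
      | _ A B =>
        have hAB : Γb.Adj A B := Γb.mem_edgeSet.1 he
        have hmem := (hμ₂fact A B hAB).2.2
        obtain ⟨A', hA'⟩ := hecon
        have : μ₂ s(A, B) ∈ V₁ := by
          rw [← hA']
          exact ((q.symm A') : ↥V₁).2
        exact Set.disjoint_left.1 hdisj this hmem
    · -- injectivity
      intro e he e' he' heq
      have hex : ∃ u : ↥V₂, gb u = e := by
        induction e with
        | _ A B => exact hex_of_adj A B (Γb.mem_edgeSet.1 he)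
      have hex' : ∃ u : ↥V₂, gb u = e' := by
        induction e' with
        | _ A B => exact hex_of_adj A B (Γb.mem_edgeSet.1 he')
      have h1 : μ₂ e = (Classical.choose hex).1 := dif_pos hex
      have h2' : μ₂ e' = (Classical.choose hex').1 := dif_pos hex'
      rw [h1, h2'] at heq
      have : Classical.choose hex = Classical.choose hex' := Subtype.ext heq
      rw [← Classical.choose_spec hex, ← Classical.choose_spec hex', this]


end PerColor
end Stmt10
end TopAux

/-- Let `G` be a finite connected bipartite simple graph with bipartition
`(V₁,V₂)` that excludes `K_h` as a topological subgraph, and let `χ` be a 2-stable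
pair-coloring that is constant on the edges from `V₁` to `V₂`. Assume `|V₂| > a·h²·|V₁|`.
Let `E*` be the set of pairs of distinct vertices of `V₁` with a common neighbor in `V₂`.
Then there are colors `c₁,…,c_r` attained on `V₁ × V₁` such that: (1) `E*` is the union of
the `E_{c_i}`; (2) the graph `H = (V₁, E*)` is connected; and (3) each `H_i = (V₁, E_{c_i})`
is a topological subgraph of `G`. -/
theorem stmt_10 {V C : Type*} [Fintype V]
    (a : ℝ) (ha : 2 ≤ a) (hdeg : DegSumConst a)
    (h : ℕ) (hh : 1 ≤ h)
    (G : SimpleGraph V) (hconn : G.Connected) (hexcl : ¬ HasTopK G h)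
    (V₁ V₂ : Set V) (hcover : V₁ ∪ V₂ = Set.univ) (hdisj : Disjoint V₁ V₂)
    (hbip : ∀ x y : V, G.Adj x y → (x ∈ V₁ ∧ y ∈ V₂) ∨ (x ∈ V₂ ∧ y ∈ V₁))
    (χ : V → V → C) (h2 : IsTwoStable G χ)
    (hedge : ∀ v₁ v₂ v₁' v₂' : V, v₁ ∈ V₁ → v₂ ∈ V₂ → v₁' ∈ V₁ → v₂' ∈ V₂ →
      G.Adj v₁ v₂ → G.Adj v₁' v₂' → χ v₁ v₂ = χ v₁' v₂')
    (hsize : a * (h : ℝ) ^ 2 * (V₁.ncard : ℝ) < (V₂.ncard : ℝ)) :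
    ∃ (r : ℕ) (c : Fin r → C),
      (∀ i : Fin r, ∃ x ∈ V₁, ∃ y ∈ V₁, χ x y = c i) ∧
      (∀ x y : ↥V₁,
        (SimpleGraph.fromRel
          (fun p q : ↥V₁ => ∃ w ∈ V₂, G.Adj p.1 w ∧ G.Adj q.1 w)).Adj x y ↔
        ∃ i : Fin r, (SimpleGraph.fromRel (fun p q : ↥V₁ => χ p.1 q.1 = c i)).Adj x y) ∧
      (SimpleGraph.fromRel
        (fun p q : ↥V₁ => ∃ w ∈ V₂, G.Adj p.1 w ∧ G.Adj q.1 w)).Preconnected ∧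
      (∀ i : Fin r,
        IsTopSubgraph (SimpleGraph.fromRel (fun p q : ↥V₁ => χ p.1 q.1 = c i)) G) := by
  classical
  haveI : Fintype ↥V₁ := Fintype.ofFinite _
  set TT : Finset C := Finset.image (fun p : ↥V₁ × ↥V₁ => χ p.1.1 p.2.1)
    (Finset.univ.filter (fun p : ↥V₁ × ↥V₁ =>
      p.1 ≠ p.2 ∧ ∃ u ∈ V₂, G.Adj p.1.1 u ∧ G.Adj p.2.1 u)) with hTT
  have e : ↥TT ≃ Fin TT.card := Fintype.equivFinOfCardEq (Fintype.card_coe TT)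
  refine ⟨TT.card, fun i => ((e.symm i) : C), ?_, ?_, ?_, ?_⟩
  · -- each color is attained on V₁ × V₁
    intro i
    have hmem : ((e.symm i : C)) ∈ TT := (e.symm i).2
    obtain ⟨p, _, hχ⟩ := Finset.mem_image.1 hmem
    exact ⟨p.1.1, p.1.2, p.2.1, p.2.2, hχ⟩
  · -- E* is the union of the color classes
    intro x y
    rw [SimpleGraph.fromRel_adj]
    constructor
    · rintro ⟨hne, hrel⟩
      rcases hrel with hrel | hrel
      · have hmem : χ x.1 y.1 ∈ TT := by
          rw [hTT, Finset.mem_image]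
          exact ⟨(x, y), Finset.mem_filter.2 ⟨Finset.mem_univ _, hne, hrel⟩, rfl⟩
        refine ⟨e ⟨_, hmem⟩, (SimpleGraph.fromRel_adj _ _ _).2 ⟨hne, Or.inl ?_⟩⟩
        exact congrArg Subtype.val (Equiv.symm_apply_apply e ⟨_, hmem⟩).symm
      · have hmem : χ y.1 x.1 ∈ TT := by
          rw [hTT, Finset.mem_image]
          exact ⟨(y, x), Finset.mem_filter.2 ⟨Finset.mem_univ _, hne.symm, hrel⟩, rfl⟩
        refine ⟨e ⟨_, hmem⟩, (SimpleGraph.fromRel_adj _ _ _).2 ⟨hne, Or.inr ?_⟩⟩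
        exact congrArg Subtype.val (Equiv.symm_apply_apply e ⟨_, hmem⟩).symm
    · rintro ⟨i, hadj⟩
      rw [SimpleGraph.fromRel_adj] at hadj
      obtain ⟨hne, hor⟩ := hadj
      have hci : ((e.symm i : C)) ∈ TT := (e.symm i).2
      obtain ⟨p, hp, hχ⟩ := Finset.mem_image.1 hci
      obtain ⟨-, hpne, u₀, hu₀, ha1, ha2⟩ := Finset.mem_filter.1 hp
      have hm1 : 0 < (TopAux.cnF G p.1.1 p.2.1).card :=
        Finset.card_pos.2 ⟨u₀, TopAux.mem_cnF.2 ⟨ha1, ha2.symm⟩⟩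
      refine ⟨hne, ?_⟩
      rcases hor with hc | hc
      · left
        have heq : (TopAux.cnF G x.1 y.1).card = (TopAux.cnF G p.1.1 p.2.1).card :=
          TopAux.cn_card_eq h2 (hc.trans hχ.symm)
        obtain ⟨u, hu⟩ := Finset.card_pos.1 (heq ▸ hm1)
        obtain ⟨hu1, hu2⟩ := TopAux.mem_cnF.1 hu
        exact ⟨u, TopAux.mem_V2_of_adj hdisj hbip x.2 hu1, hu1, hu2.symm⟩
      · right
        have heq : (TopAux.cnF G y.1 x.1).card = (TopAux.cnF G p.1.1 p.2.1).card :=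
          TopAux.cn_card_eq h2 (hc.trans hχ.symm)
        obtain ⟨u, hu⟩ := Finset.card_pos.1 (heq ▸ hm1)
        obtain ⟨hu1, hu2⟩ := TopAux.mem_cnF.1 hu
        exact ⟨u, TopAux.mem_V2_of_adj hdisj hbip y.2 hu1, hu1, hu2.symm⟩
  · -- connectivity of H
    intro x y
    obtain ⟨p⟩ := hconn.preconnected x.1 y.1
    exact TopAux.reach_in_H hdisj hbip p.length x.1 y.1 x.2 y.2 p le_rfl
  · -- each color class is a topological subgraph
    intro i
    have hci : ((e.symm i : C)) ∈ TT := (e.symm i).2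
    obtain ⟨p, hp, hχ⟩ := Finset.mem_image.1 hci
    obtain ⟨-, hpne, u₀, hu₀, ha1, ha2⟩ := Finset.mem_filter.1 hp
    exact TopAux.class_topsub hdisj hbip hconn h2 hedge p.1.2 p.2.2
      (fun hc => hpne (Subtype.ext hc)) ha1 ha2 hχ a hdeg h hh hexcl hsize
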